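/- Let h : [0,∞) → ℝ be locally integrable and define f(t) = ∫₀ᵗ h(s) ds. Then for every t ≥ 0, the positive part satisfies f(t)⁺ ≤ ∫₀ᵗ 𝟙{f(s) > 0} · h(s) ds, where f(t)⁺ = max(f(t), 0). -/

import Mathlib

open MeasureTheory intervalIntegral Set Filter Topology

private lemma hasDerivAt_prim {g : ℝ → ℝ} (hg : Continuous g) (x : ℝ) :
    HasDerivAt (fun u => ∫ s in (0:ℝ)..u, g s) (g x) x :=
  integral_hasDerivAt_right (hg.intervalIntegrable 0 x)
    (hg.stronglyMeasurableAtFilter _ _) hg.continuousAt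

noncomputable def psiAux (c x : ℝ) : ℝ := max 0 (min (c * x) 1)

private lemma psiAux_cont (c : ℝ) : Continuous (psiAux c) :=
  continuous_const.max ((continuous_const.mul continuous_id).min continuous_const)

private lemma psiAux_nonneg (c x : ℝ) : 0 ≤ psiAux c x := le_max_left _ _

private lemma psiAux_le_one (c x : ℝ) : psiAux c x ≤ 1 :=
  max_le (by norm_num) (min_le_right _ _)

private lemma psiAux_abs_le (c x : ℝ) : |psiAux c x| ≤ 1 :=
  abs_le.2 ⟨by linarith [psiAux_nonneg c x], psiAux_le_one c x⟩

private lemma psiAux_of_nonpos {c x : ℝ} (hc : 0 ≤ c) (hx : x ≤ 0) : psiAux c x = 0 :=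
  max_eq_left (min_le_of_left_le (mul_nonpos_of_nonneg_of_nonpos hc hx))

private lemma psiAux_of_ge {c x : ℝ} (h : 1 ≤ c * x) : psiAux c x = 1 := by
  rw [psiAux, min_eq_right h, max_eq_right zero_le_one]

private lemma psiAux_lip (c x y : ℝ) (hc : 0 ≤ c) :
    |psiAux c x - psiAux c y| ≤ c * |x - y| := by
  have h1 : |psiAux c x - psiAux c y| ≤ |min (c * x) 1 - min (c * y) 1| := by
    rw [psiAux, psiAux, max_comm 0 (min (c*x) 1), max_comm 0 (min (c*y) 1)]
    exact abs_max_sub_max_le_abs _ _ 0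
  have h2 : |min (c * x) 1 - min (c * y) 1| ≤ |c * x - c * y| := by
    simpa using abs_min_sub_min_le_max (c*x) 1 (c*y) 1
  calc |psiAux c x - psiAux c y| ≤ |c * x - c * y| := h1.trans h2
    _ = c * |x - y| := by rw [← mul_sub, abs_mul, abs_of_nonneg hc]

noncomputable def phiAux (c x : ℝ) : ℝ := ∫ u in (0:ℝ)..x, psiAux c u

private lemma phiAux_lower {c : ℝ} (hc : 0 < c) (x : ℝ) :
    max x 0 ≤ phiAux c x + 1 / c := by
  rcases le_or_gt x 0 with hx | hx
  · have h0 : phiAux c x = 0 := by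
      rw [phiAux]
      have heq : EqOn (psiAux c) (fun _ => (0:ℝ)) (uIcc 0 x) := by
        intro u hu
        rw [uIcc_of_ge hx] at hu
        exact psiAux_of_nonpos hc.le hu.2
      rw [intervalIntegral.integral_congr heq, intervalIntegral.integral_const]
      simp
    rw [max_eq_right hx, h0]
    positivity
  · rw [max_eq_left hx.le]
    rcases le_or_gt x (1/c) with hxc | hxc
    · have h0 : 0 ≤ phiAux c x :=
        intervalIntegral.integral_nonneg hx.le (fun u _ => psiAux_nonneg c u)
      linarith
    · have hint1 : IntervalIntegrable (psiAux c) volume 0 (1/c) :=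
        (psiAux_cont c).intervalIntegrable _ _
      have hint2 : IntervalIntegrable (psiAux c) volume (1/c) x :=
        (psiAux_cont c).intervalIntegrable _ _
      have hsplit : phiAux c x
          = (∫ u in (0:ℝ)..(1/c), psiAux c u) + ∫ u in (1/c)..x, psiAux c u :=
        (integral_add_adjacent_intervals hint1 hint2).symm
      have h1 : 0 ≤ ∫ u in (0:ℝ)..(1/c), psiAux c u :=
        intervalIntegral.integral_nonneg (by positivity) (fun u _ => psiAux_nonneg c u)
      have h2 : (∫ u in (1/c)..x, psiAux c u) = x - 1/c := by
        have heq : EqOn (psiAux c) (fun _ => (1:ℝ)) (uIcc (1/c) x) := by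
          intro u hu
          rw [uIcc_of_le hxc.le] at hu
          apply psiAux_of_ge
          exact (div_le_iff₀' hc).mp hu.1
        rw [intervalIntegral.integral_congr heq, intervalIntegral.integral_const]
        simp
      rw [hsplit, h2]
      linarith

/-- Chain rule identity for primitives, proved by density of continuous functions in `L¹`. -/
private lemma lemA {H : ℝ → ℝ} (HI : Integrable H volume) {t : ℝ} (ht : 0 ≤ t)
    {ψ : ℝ → ℝ} (hψc : Continuous ψ) (hψ1 : ∀ x, |ψ x| ≤ 1)
    {K : ℝ} (hK : 0 ≤ K) (hψL : ∀ x y, |ψ x - ψ y| ≤ K * |x - y|) :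
    (∫ u in (0:ℝ)..(∫ s in (0:ℝ)..t, H s), ψ u)
      = ∫ s in Ioc (0:ℝ) t, ψ (∫ u in (0:ℝ)..s, H u) * H s := by
  set F : ℝ → ℝ := fun s => ∫ u in (0:ℝ)..s, H u with hF
  set φ : ℝ → ℝ := fun x => ∫ u in (0:ℝ)..x, ψ u with hφ
  have contF : Continuous F := HI.continuous_primitive 0
  set B : ℝ := ∫ x, |H x| with hB
  have hB0 : 0 ≤ B := integral_nonneg (fun x => abs_nonneg _)
  set D : ℝ := φ (F t) - ∫ s in Ioc (0:ℝ) t, ψ (F s) * H s with hD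
  have ibF : Integrable (fun s => ψ (F s) * H s) (volume.restrict (Ioc (0:ℝ) t)) := by
    refine Integrable.bdd_mul (c := 1) (HI.restrict) ?_ (Eventually.of_forall fun s => by
      simpa [Real.norm_eq_abs] using hψ1 (F s))
    exact (hψc.comp contF).aestronglyMeasurable
  have key : ∀ δ > (0:ℝ), |D| ≤ (2 + K * B) * δ := by
    intro δ hδ
    obtain ⟨g, -, hgδ, hgc, hgi⟩ := HI.exists_hasCompactSupport_integral_sub_le hδ
    set G : ℝ → ℝ := fun s => ∫ u in (0:ℝ)..s, g u with hG
    have contG : Continuous G := hgi.continuous_primitive 0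
    -- |F s - G s| ≤ δ for all s
    have hFG : ∀ s, |F s - G s| ≤ δ := by
      intro s
      have h1 : F s - G s = ∫ u in (0:ℝ)..s, (H u - g u) :=
        (intervalIntegral.integral_sub HI.intervalIntegrable
          (hgc.intervalIntegrable _ _)).symm
      have h2 : |∫ u in (0:ℝ)..s, (H u - g u)| ≤ ∫ u in Set.uIoc (0:ℝ) s, ‖H u - g u‖ := by
        simpa [Real.norm_eq_abs] using
          intervalIntegral.norm_integral_le_integral_norm_uIoc
            (f := fun u => H u - g u) (a := (0:ℝ)) (b := s) (μ := volume)
      have h3 : (∫ u in Set.uIoc (0:ℝ) s, ‖H u - g u‖) ≤ ∫ u, ‖H u - g u‖ :=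
        setIntegral_le_integral (HI.sub hgi).norm
          (Eventually.of_forall fun x => norm_nonneg _)
      rw [h1]
      exact h2.trans (h3.trans hgδ)
    -- φ is 1-Lipschitz
    have hφLip : ∀ x y, |φ x - φ y| ≤ |x - y| := by
      intro x y
      have h1 : φ x - φ y = ∫ u in y..x, ψ u :=
        integral_interval_sub_left (hψc.intervalIntegrable _ _)
          (hψc.intervalIntegrable _ _)
      rw [h1]
      simpa [Real.norm_eq_abs] using
        intervalIntegral.norm_integral_le_of_norm_le_const
          (f := ψ) (a := y) (b := x) (C := 1)
          (fun u _ => by simpa [Real.norm_eq_abs] using hψ1 u)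
    -- FTC for the smooth approximation
    have hcomp : ∀ s, HasDerivAt (fun u => φ (G u)) (ψ (G s) * g s) s := by
      intro s
      exact (hasDerivAt_prim hψc (G s)).comp s (hasDerivAt_prim hgc s)
    have eq1 : (∫ s in (0:ℝ)..t, ψ (G s) * g s) = φ (G t) := by
      have e := integral_eq_sub_of_hasDerivAt (f := fun u => φ (G u))
        (f' := fun s => ψ (G s) * g s) (a := (0:ℝ)) (b := t)
        (fun s _ => hcomp s) (((hψc.comp contG).mul hgc).intervalIntegrable _ _)
      have hG0 : G 0 = 0 := integral_same
      have hφ0 : φ 0 = 0 := integral_same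
      rw [e]; simp only [hG0, hφ0, sub_zero]
    have eq1' : (∫ s in Ioc (0:ℝ) t, ψ (G s) * g s) = φ (G t) := by
      rw [← eq1, intervalIntegral.integral_of_le ht]
    -- integrability of the pieces
    have ib1 : Integrable (fun s => ψ (G s) * (g s - H s))
        (volume.restrict (Ioc (0:ℝ) t)) := by
      refine Integrable.bdd_mul (c := 1) ((hgi.sub HI).restrict) ?_ (Eventually.of_forall fun s => by
        simpa [Real.norm_eq_abs] using hψ1 (G s))
      exact (hψc.comp contG).aestronglyMeasurable
    have ib2 : Integrable (fun s => (ψ (G s) - ψ (F s)) * H s)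
        (volume.restrict (Ioc (0:ℝ) t)) := by
      refine Integrable.bdd_mul (c := 2) (HI.restrict) ?_ (Eventually.of_forall fun s => by
        have a1 := hψ1 (G s); have a2 := hψ1 (F s)
        simp only [Real.norm_eq_abs]
        calc |ψ (G s) - ψ (F s)| ≤ |ψ (G s)| + |ψ (F s)| := abs_sub _ _
          _ ≤ 2 := by linarith)
      exact ((hψc.comp contG).sub (hψc.comp contF)).aestronglyMeasurable
    have iaG : Integrable (fun s => ψ (G s) * g s)
        (volume.restrict (Ioc (0:ℝ) t)) :=
      ((hψc.comp contG).mul hgc).integrableOn_Ioc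
    -- split the difference of the two integrals
    have hsplit : (∫ s in Ioc (0:ℝ) t, ψ (G s) * g s)
        - (∫ s in Ioc (0:ℝ) t, ψ (F s) * H s)
        = (∫ s in Ioc (0:ℝ) t, ψ (G s) * (g s - H s))
          + ∫ s in Ioc (0:ℝ) t, (ψ (G s) - ψ (F s)) * H s := by
      rw [← integral_add ib1 ib2, ← integral_sub iaG ibF]
      exact integral_congr_ae (Eventually.of_forall fun s => by ring)
    -- estimates
    have est1 : |φ (F t) - φ (G t)| ≤ δ := (hφLip _ _).trans (hFG t)
    have estA : |∫ s in Ioc (0:ℝ) t, ψ (G s) * (g s - H s)| ≤ δ := by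
      have hb : ‖∫ s in Ioc (0:ℝ) t, ψ (G s) * (g s - H s)‖
          ≤ ∫ s in Ioc (0:ℝ) t, ‖H s - g s‖ := by
        refine norm_integral_le_of_norm_le (((HI.sub hgi).norm).restrict)
          (Eventually.of_forall fun s => ?_)
        have := psiAux_nonneg
        calc ‖ψ (G s) * (g s - H s)‖ = |ψ (G s)| * |g s - H s| := by
              simp [Real.norm_eq_abs, abs_mul]
          _ ≤ 1 * |g s - H s| := by
              have := abs_nonneg (g s - H s); nlinarith [hψ1 (G s)]
          _ = ‖H s - g s‖ := by rw [one_mul, Real.norm_eq_abs, abs_sub_comm]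
      have h3 : (∫ s in Ioc (0:ℝ) t, ‖H s - g s‖) ≤ ∫ u, ‖H u - g u‖ :=
        setIntegral_le_integral (HI.sub hgi).norm
          (Eventually.of_forall fun x => norm_nonneg _)
      calc |∫ s in Ioc (0:ℝ) t, ψ (G s) * (g s - H s)|
          ≤ ∫ s in Ioc (0:ℝ) t, ‖H s - g s‖ := hb
        _ ≤ ∫ u, ‖H u - g u‖ := h3
        _ ≤ δ := hgδ
    have estB : |∫ s in Ioc (0:ℝ) t, (ψ (G s) - ψ (F s)) * H s| ≤ K * δ * B := by
      have hb : ‖∫ s in Ioc (0:ℝ) t, (ψ (G s) - ψ (F s)) * H s‖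
          ≤ ∫ s in Ioc (0:ℝ) t, K * δ * |H s| := by
        refine norm_integral_le_of_norm_le (((HI.norm.const_mul (K * δ))).restrict)
          (Eventually.of_forall fun s => ?_)
        calc ‖(ψ (G s) - ψ (F s)) * H s‖ = |ψ (G s) - ψ (F s)| * |H s| := by
              simp [Real.norm_eq_abs, abs_mul]
          _ ≤ (K * δ) * |H s| := by
              have h1 : |ψ (G s) - ψ (F s)| ≤ K * |G s - F s| := hψL _ _
              have h2 : |G s - F s| ≤ δ := by rw [abs_sub_comm]; exact hFG s
              have h3 := abs_nonneg (H s)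
              have h4' : |ψ (G s) - ψ (F s)| ≤ K * δ :=
                h1.trans (mul_le_mul_of_nonneg_left h2 hK)
              exact mul_le_mul_of_nonneg_right h4' h3
      have h4 : (∫ s in Ioc (0:ℝ) t, K * δ * |H s|)
          = K * δ * ∫ s in Ioc (0:ℝ) t, |H s| := by
        simpa using MeasureTheory.integral_const_mul (μ := volume.restrict (Ioc (0:ℝ) t))
          (K * δ) (fun s => |H s|)
      have h5 : (∫ s in Ioc (0:ℝ) t, |H s|) ≤ B := by
        refine setIntegral_le_integral ?_ (Eventually.of_forall fun x => abs_nonneg _)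
        simpa [Real.norm_eq_abs] using HI.norm
      have h6 : K * δ * (∫ s in Ioc (0:ℝ) t, |H s|) ≤ K * δ * B :=
        mul_le_mul_of_nonneg_left h5 (by positivity)
      calc |∫ s in Ioc (0:ℝ) t, (ψ (G s) - ψ (F s)) * H s|
          ≤ ∫ s in Ioc (0:ℝ) t, K * δ * |H s| := hb
        _ = K * δ * ∫ s in Ioc (0:ℝ) t, |H s| := h4
        _ ≤ K * δ * B := h6
    -- combine
    have hDsplit : D = (φ (F t) - φ (G t))
        + ((∫ s in Ioc (0:ℝ) t, ψ (G s) * (g s - H s))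
          + ∫ s in Ioc (0:ℝ) t, (ψ (G s) - ψ (F s)) * H s) := by
      rw [← hsplit, eq1', hD]; ring
    calc |D| ≤ |φ (F t) - φ (G t)|
        + |(∫ s in Ioc (0:ℝ) t, ψ (G s) * (g s - H s))
          + ∫ s in Ioc (0:ℝ) t, (ψ (G s) - ψ (F s)) * H s| := by
          rw [hDsplit]; exact abs_add_le _ _
      _ ≤ |φ (F t) - φ (G t)|
          + (|∫ s in Ioc (0:ℝ) t, ψ (G s) * (g s - H s)|
            + |∫ s in Ioc (0:ℝ) t, (ψ (G s) - ψ (F s)) * H s|) := by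
          have := abs_add_le (∫ s in Ioc (0:ℝ) t, ψ (G s) * (g s - H s))
            (∫ s in Ioc (0:ℝ) t, (ψ (G s) - ψ (F s)) * H s)
          linarith
      _ ≤ δ + (δ + K * δ * B) := by linarith
      _ = (2 + K * B) * δ := by ring
  -- conclude D = 0
  have hD0 : D = 0 := by
    by_contra hne
    have habs : 0 < |D| := abs_pos.2 hne
    have hC : (0:ℝ) < 2 + K * B := by positivity
    have h := key (|D| / (2 * (2 + K * B))) (by positivity)
    have heq : (2 + K * B) * (|D| / (2 * (2 + K * B))) = |D| / 2 := by
      field_simp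
    rw [heq] at h
    linarith
  have := sub_eq_zero.mp hD0
  exact this

theorem posPart_le_integral_indicator
    (h : ℝ → ℝ) (hh : LocallyIntegrableOn h (Set.Ici 0))
    (f : ℝ → ℝ) (hf : ∀ t, f t = ∫ s in (0:ℝ)..t, h s) :
    ∀ t ≥ (0:ℝ), max (f t) 0 ≤ ∫ s in (0:ℝ)..t, (if 0 < f s then h s else 0) := by
  intro t ht
  have hIcc : IntegrableOn h (Icc 0 t) volume :=
    hh.integrableOn_compact_subset Icc_subset_Ici_self isCompact_Icc
  set H : ℝ → ℝ := (Ioc (0:ℝ) t).indicator h with hHdef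
  have HI : Integrable H volume :=
    (hIcc.mono_set Ioc_subset_Icc_self).integrable_indicator measurableSet_Ioc
  set F : ℝ → ℝ := fun s => ∫ u in (0:ℝ)..s, H u with hFdef
  have contF : Continuous F := HI.continuous_primitive 0
  have hFf : ∀ s ∈ Icc (0:ℝ) t, F s = f s := by
    intro s hs
    rw [hf s, hFdef]
    simp only
    rw [intervalIntegral.integral_of_le hs.1, intervalIntegral.integral_of_le hs.1]
    refine setIntegral_congr_fun measurableSet_Ioc (fun u hu => ?_)
    exact indicator_of_mem (Set.mem_Ioc.mpr ⟨hu.1, hu.2.trans hs.2⟩) h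
  -- rewrite both sides in terms of F and H
  have hLHS : max (f t) 0 = max (F t) 0 := by
    rw [hFf t (Set.mem_Icc.mpr ⟨ht, le_refl t⟩)]
  have hRHS : (∫ s in (0:ℝ)..t, (if 0 < f s then h s else 0))
      = ∫ s in Ioc (0:ℝ) t, (if 0 < F s then H s else 0) := by
    rw [intervalIntegral.integral_of_le ht]
    refine setIntegral_congr_fun measurableSet_Ioc (fun s hs => ?_)
    rw [hFf s (Set.mem_Icc.mpr ⟨hs.1.le, hs.2⟩), hHdef]
    simp only [indicator_of_mem hs]
  rw [hLHS, hRHS]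
  -- main estimate via the smooth approximations
  set Q : ℝ → ℝ := fun s => if 0 < F s then H s else 0 with hQdef
  set a : ℕ → ℝ := fun n => ∫ s in Ioc (0:ℝ) t, psiAux ((n:ℝ)+1) (F s) * H s with hadef
  have step1 : ∀ n : ℕ, max (F t) 0 ≤ a n + 1 / ((n:ℝ)+1) := by
    intro n
    have hc : (0:ℝ) < (n:ℝ)+1 := by positivity
    have hA : phiAux ((n:ℝ)+1) (F t) = a n := by
      rw [phiAux, hadef]
      exact lemA HI ht (psiAux_cont _) (psiAux_abs_le _) hc.le
        (fun x y => psiAux_lip _ x y hc.le)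
    have := phiAux_lower hc (F t)
    rw [hA] at this
    exact this
  have step2 : Tendsto a atTop (𝓝 (∫ s in Ioc (0:ℝ) t, Q s)) := by
    refine tendsto_integral_of_dominated_convergence (fun s => ‖H s‖)
      (fun n => ?_) ((HI.norm).restrict) (fun n => ?_) ?_
    · exact (((psiAux_cont _).comp contF).aestronglyMeasurable).mul
        (HI.aestronglyMeasurable.restrict)
    · refine Eventually.of_forall fun s => ?_
      calc ‖psiAux ((n:ℝ)+1) (F s) * H s‖
          = |psiAux ((n:ℝ)+1) (F s)| * |H s| := by simp [Real.norm_eq_abs, abs_mul]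
        _ ≤ 1 * |H s| := by
            have := abs_nonneg (H s); nlinarith [psiAux_abs_le ((n:ℝ)+1) (F s)]
        _ = ‖H s‖ := by rw [one_mul, Real.norm_eq_abs]
    · refine Eventually.of_forall fun s => ?_
      by_cases hFs : 0 < F s
      · rw [hQdef]
        simp only [if_pos hFs]
        obtain ⟨N, hN⟩ := exists_nat_ge (1 / F s)
        refine Tendsto.congr' ?_ tendsto_const_nhds
        refine eventually_atTop.2 ⟨N, fun n hn => ?_⟩
        show H s = psiAux ((n:ℝ)+1) (F s) * H s
        have h1 : 1 ≤ ((n:ℝ)+1) * F s := by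
          have hchain : 1 / F s ≤ (n:ℝ)+1 := by
            calc 1 / F s ≤ (N:ℝ) := hN
              _ ≤ (n:ℝ) := by exact_mod_cast hn
              _ ≤ (n:ℝ)+1 := by linarith
          exact (div_le_iff₀ hFs).mp hchain
        rw [psiAux_of_ge h1, one_mul]
      · push_neg at hFs
        rw [hQdef]
        simp only [if_neg (not_lt.2 hFs)]
        have : ∀ n : ℕ, psiAux ((n:ℝ)+1) (F s) * H s = 0 := by
          intro n
          rw [psiAux_of_nonpos (by positivity) hFs, zero_mul]
        simp only [this]
        exact tendsto_const_nhds
  have step3 : Tendsto (fun n => a n + 1 / ((n:ℝ)+1)) atTop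
      (𝓝 ((∫ s in Ioc (0:ℝ) t, Q s) + 0)) :=
    step2.add tendsto_one_div_add_atTop_nhds_zero_nat
  rw [add_zero] at step3
  exact ge_of_tendsto step3 (Eventually.of_forall step1)
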